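/- Define δ̄ : [0,∞) → ℝ by δ̄(x) = l if x ∈ [l, l + l^{-5/2}] for some integer l ≥ 2, and δ̄(x) = 0 otherwise. Then ∫₀^∞ δ̄(x) dx < ∞, and for all integers n, k with 2 ≤ k < n, lim_{x→∞} x^{-(2n-2k)} ∫₀^x δ̄(τ)² τ^{2(n-k)+1} dτ = ∞. -/

import Mathlib

open MeasureTheory Filter Set
open scoped ENNReal NNReal

private noncomputable def Astep (l : ℕ) : Set ℝ :=
  if 2 ≤ l then Icc (l : ℝ) ((l : ℝ) + (l : ℝ) ^ (-(5 / 2) : ℝ)) else ∅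

private lemma Astep_meas (l : ℕ) : MeasurableSet (Astep l) := by
  unfold Astep; split <;> measurability

private lemma eps_lt_one {l : ℕ} (hl : 2 ≤ l) : (l : ℝ) ^ (-(5 / 2) : ℝ) < 1 := by
  apply Real.rpow_lt_one_of_one_lt_of_neg
  · exact_mod_cast Nat.lt_of_lt_of_le one_lt_two hl
  · norm_num

private lemma eps_nonneg (l : ℕ) : 0 ≤ (l : ℝ) ^ (-(5 / 2) : ℝ) :=
  Real.rpow_nonneg (Nat.cast_nonneg l) _

private lemma Astep_floor {l : ℕ} {x : ℝ} (hx : x ∈ Astep l) : ⌊x⌋₊ = l := by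
  unfold Astep at hx
  split at hx
  · next hl =>
    rcases hx with ⟨h1, h2⟩
    have h3 : x < (l : ℝ) + 1 := lt_of_le_of_lt h2 (by linarith [eps_lt_one hl])
    exact Nat.floor_eq_iff (le_trans (Nat.cast_nonneg l) h1) |>.2 ⟨h1, h3⟩
  · exact absurd hx (notMem_empty x)

private lemma Astep_disjoint : Pairwise (Function.onFun Disjoint Astep) := by
  intro i j hij
  refine Set.disjoint_left.2 fun x hxi hxj => hij ?_
  rw [← Astep_floor hxi, ← Astep_floor hxj]

theorem stmt8 (δ : ℝ → ℝ)
    (hδ1 : ∀ l : ℕ, 2 ≤ l →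
      ∀ x ∈ Icc (l : ℝ) ((l : ℝ) + (l : ℝ) ^ (-(5 / 2) : ℝ)), δ x = (l : ℝ))
    (hδ2 : ∀ x : ℝ,
      (∀ l : ℕ, 2 ≤ l → x ∉ Icc (l : ℝ) ((l : ℝ) + (l : ℝ) ^ (-(5 / 2) : ℝ))) → δ x = 0) :
    IntegrableOn δ (Ici 0) ∧
      ∀ n k : ℕ, 2 ≤ k → k < n →
        Tendsto (fun x : ℝ =>
            (∫ τ in (0 : ℝ)..x, δ τ ^ 2 * τ ^ (2 * (n - k) + 1)) / x ^ (2 * n - 2 * k))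
          atTop atTop := by
  have hmemA : ∀ (l : ℕ) (x : ℝ), x ∈ Astep l → 2 ≤ l ∧
      x ∈ Icc (l : ℝ) ((l : ℝ) + (l : ℝ) ^ (-(5 / 2) : ℝ)) := by
    intro l x hx
    unfold Astep at hx
    split at hx
    · next h => exact ⟨h, hx⟩
    · exact absurd hx (notMem_empty x)
  have hrep : ∀ x, δ x = Set.indicator (⋃ l, Astep l) (fun x => (⌊x⌋₊ : ℝ)) x := by
    intro x
    by_cases hx : x ∈ ⋃ l, Astep l
    · obtain ⟨l, hl⟩ := mem_iUnion.1 hx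
      obtain ⟨hl2, hmem⟩ := hmemA l x hl
      rw [Set.indicator_of_mem hx, Astep_floor hl, hδ1 l hl2 x hmem]
    · rw [Set.indicator_of_notMem hx]
      refine hδ2 x fun l hl2 hmem => hx (mem_iUnion.2 ⟨l, ?_⟩)
      unfold Astep; rw [if_pos hl2]; exact hmem
  have hUnion : MeasurableSet (⋃ l, Astep l) := MeasurableSet.iUnion Astep_meas
  have hmeas : Measurable δ := by
    have h1 : Measurable (fun x : ℝ => (⌊x⌋₊ : ℝ)) :=
      measurable_from_top.comp Nat.measurable_floor
    have h2 : δ = Set.indicator (⋃ l, Astep l) (fun x : ℝ => (⌊x⌋₊ : ℝ)) := funext hrep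
    rw [h2]; exact h1.indicator hUnion
  have hnonneg : ∀ x, 0 ≤ δ x := by
    intro x
    rw [hrep x]
    exact Set.indicator_nonneg (fun y _ => Nat.cast_nonneg _) x
  have hle : ∀ x, δ x ≤ max x 0 := by
    intro x
    by_cases hx : x ∈ ⋃ l, Astep l
    · obtain ⟨l, hl⟩ := mem_iUnion.1 hx
      obtain ⟨hl2, hmem⟩ := hmemA l x hl
      rw [hδ1 l hl2 x hmem]
      exact le_max_of_le_left hmem.1
    · rw [hrep x, Set.indicator_of_notMem hx]
      exact le_max_right _ _
  constructor
  · -- integrability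
    refine ⟨hmeas.aestronglyMeasurable, ?_⟩
    rw [hasFiniteIntegral_def]
    have keyrep : (fun x : ℝ => (‖δ x‖₊ : ℝ≥0∞)) =
        Set.indicator (⋃ l, Astep l) (fun x => (‖(⌊x⌋₊ : ℝ)‖₊ : ℝ≥0∞)) := by
      funext x
      rw [hrep x]
      by_cases hx : x ∈ ⋃ l, Astep l
      · rw [Set.indicator_of_mem hx, Set.indicator_of_mem hx]
      · rw [Set.indicator_of_notMem hx, Set.indicator_of_notMem hx]; simp
    have termbound : ∀ l : ℕ, (∫⁻ a in Astep l, (‖(⌊a⌋₊ : ℝ)‖₊ : ℝ≥0∞)) ≤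
        ENNReal.ofReal ((l : ℝ) ^ (-(3 / 2) : ℝ)) := by
      intro l
      by_cases hl : 2 ≤ l
      · have hl0 : (0 : ℝ) < l := by exact_mod_cast Nat.lt_of_lt_of_le Nat.zero_lt_two hl
        have hcongr : (∫⁻ a in Astep l, (‖(⌊a⌋₊ : ℝ)‖₊ : ℝ≥0∞)) =
            ∫⁻ _ in Astep l, ENNReal.ofReal (l : ℝ) := by
          refine setLIntegral_congr_fun (Astep_meas l) (fun a ha => ?_)
          rw [Astep_floor ha]; exact Real.enorm_eq_ofReal (Nat.cast_nonneg l)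
        have hvol : volume (Astep l) = ENNReal.ofReal ((l : ℝ) ^ (-(5 / 2) : ℝ)) := by
          unfold Astep
          rw [if_pos hl, Real.volume_Icc, add_sub_cancel_left]
        rw [hcongr, setLIntegral_const, hvol,
          ← ENNReal.ofReal_mul (Nat.cast_nonneg l)]
        apply le_of_eq
        congr 1
        calc (l : ℝ) * (l : ℝ) ^ (-(5 / 2) : ℝ)
            = (l : ℝ) ^ (1 : ℝ) * (l : ℝ) ^ (-(5 / 2) : ℝ) := by rw [Real.rpow_one]
          _ = (l : ℝ) ^ ((1 : ℝ) + -(5 / 2)) := (Real.rpow_add hl0 _ _).symm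
          _ = (l : ℝ) ^ (-(3 / 2) : ℝ) := by norm_num
      · have : Astep l = ∅ := by unfold Astep; rw [if_neg hl]
        rw [this]
        simp [Real.rpow_nonneg (Nat.cast_nonneg l)]
    calc (∫⁻ a in Ici (0 : ℝ), (‖δ a‖₊ : ℝ≥0∞))
        ≤ ∫⁻ a, (‖δ a‖₊ : ℝ≥0∞) := setLIntegral_le_lintegral _ _
      _ = ∫⁻ a in ⋃ l, Astep l, (‖(⌊a⌋₊ : ℝ)‖₊ : ℝ≥0∞) := by
          rw [show (fun a : ℝ => ((‖δ a‖₊ : ℝ≥0∞))) = _ from keyrep,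
            lintegral_indicator hUnion]
      _ = ∑' l : ℕ, ∫⁻ a in Astep l, (‖(⌊a⌋₊ : ℝ)‖₊ : ℝ≥0∞) :=
          lintegral_iUnion Astep_meas Astep_disjoint _
      _ ≤ ∑' l : ℕ, ENNReal.ofReal ((l : ℝ) ^ (-(3 / 2) : ℝ)) :=
          ENNReal.tsum_le_tsum termbound
      _ = ENNReal.ofReal (∑' l : ℕ, (l : ℝ) ^ (-(3 / 2) : ℝ)) :=
          (ENNReal.ofReal_tsum_of_nonneg
            (fun l => Real.rpow_nonneg (Nat.cast_nonneg l) _)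
            (Real.summable_nat_rpow.mpr (by norm_num))).symm
      _ < ⊤ := ENNReal.ofReal_lt_top
  · -- divergence
    intro n k hk hkn
    have hnk : 2 * n - 2 * k = 2 * (n - k) := by omega
    set m := n - k with hmdef
    simp only [hnk]
    set f : ℝ → ℝ := fun τ => δ τ ^ 2 * τ ^ (2 * m + 1) with hf
    set c : ℝ := (1 / 2 : ℝ) ^ (2 * m + 3) with hcdef
    have hc : 0 < c := by positivity
    refine tendsto_atTop_mono' atTop ?_
      ((tendsto_rpow_atTop (by norm_num : (0 : ℝ) < 1 / 2)).const_mul_atTop hc)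
    filter_upwards [eventually_ge_atTop (6 : ℝ)] with x hx6
    have hx0 : (0 : ℝ) < x := by linarith
    set L : ℕ := ⌊x⌋₊ - 1 with hLdef
    have hfloor6 : 6 ≤ ⌊x⌋₊ := Nat.le_floor (by exact_mod_cast hx6)
    have hL2 : 2 ≤ L := by omega
    have hLc : (L : ℝ) = (⌊x⌋₊ : ℝ) - 1 := by
      rw [hLdef, Nat.cast_sub (by omega), Nat.cast_one]
    have hfl : (⌊x⌋₊ : ℝ) ≤ x := Nat.floor_le (le_of_lt hx0)
    have hfl2 : x < (⌊x⌋₊ : ℝ) + 1 := Nat.lt_floor_add_one x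
    have hLge : x / 2 ≤ (L : ℝ) := by rw [hLc]; linarith
    have hL0 : (0 : ℝ) < L := by linarith
    set ε : ℝ := (L : ℝ) ^ (-(5 / 2) : ℝ) with hεdef
    have hε0 : 0 ≤ ε := eps_nonneg L
    have hε1 : ε < 1 := eps_lt_one hL2
    have htop : (L : ℝ) + ε ≤ x := by rw [hLc]; linarith
    have hLx : (L : ℝ) ≤ x := by linarith
    -- integrability of f on [0, x]
    have hmeasf : Measurable f := (hmeas.pow_const 2).mul (measurable_id.pow_const _)
    have hIntAll : IntegrableOn f (Icc 0 x) := by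
      refine Measure.integrableOn_of_bounded (M := x ^ 2 * x ^ (2 * m + 1))
        measure_Icc_lt_top.ne hmeasf.aestronglyMeasurable ?_
      filter_upwards [ae_restrict_mem measurableSet_Icc] with τ hτ
      obtain ⟨hτ0, hτx⟩ := hτ
      have h1 : 0 ≤ δ τ := hnonneg τ
      have h2 : δ τ ≤ x := le_trans (hle τ) (by rw [max_eq_left hτ0]; exact hτx)
      have h3 : ‖f τ‖ = δ τ ^ 2 * τ ^ (2 * m + 1) := by
        rw [hf, Real.norm_eq_abs, abs_of_nonneg (by positivity)]
      rw [h3]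
      gcongr
    have hii : ∀ a b : ℝ, 0 ≤ a → 0 ≤ b → a ≤ x → b ≤ x →
        IntervalIntegrable f volume a b := by
      intro a b ha hb hax hbx
      exact (hIntAll.mono_set (uIcc_subset_Icc ⟨ha, hax⟩ ⟨hb, hbx⟩)).intervalIntegrable
    have i1 : IntervalIntegrable f volume 0 (L : ℝ) :=
      hii _ _ le_rfl (le_of_lt hL0) (le_of_lt hx0) hLx
    have i2 : IntervalIntegrable f volume (L : ℝ) ((L : ℝ) + ε) :=
      hii _ _ (le_of_lt hL0) (by linarith) hLx htop
    have i3 : IntervalIntegrable f volume ((L : ℝ) + ε) x :=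
      hii _ _ (by linarith) (le_of_lt hx0) htop le_rfl
    have hsplit : (∫ τ in (0 : ℝ)..x, f τ) =
        (∫ τ in (0 : ℝ)..(L : ℝ), f τ) + ((∫ τ in (L : ℝ)..((L : ℝ) + ε), f τ) +
          ∫ τ in ((L : ℝ) + ε)..x, f τ) := by
      rw [intervalIntegral.integral_add_adjacent_intervals i2 i3,
        intervalIntegral.integral_add_adjacent_intervals i1 (i2.trans i3)]
    have hnn : ∀ a b : ℝ, 0 ≤ a → a ≤ b → 0 ≤ ∫ τ in a..b, f τ := by
      intro a b ha hab
      refine intervalIntegral.integral_nonneg hab fun u hu => ?_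
      have hu0 : 0 ≤ u := le_trans ha hu.1
      rw [hf]; positivity
    have hmid : ε * (L : ℝ) ^ (2 * m + 3) ≤ ∫ τ in (L : ℝ)..((L : ℝ) + ε), f τ := by
      have hmono := intervalIntegral.integral_mono_on (f := fun _ : ℝ => (L : ℝ) ^ (2 * m + 3))
        (g := f) (μ := volume) (by linarith : (L : ℝ) ≤ (L : ℝ) + ε)
        intervalIntegrable_const i2 ?_
      · rwa [intervalIntegral.integral_const, add_sub_cancel_left, smul_eq_mul] at hmono
      · intro τ hτ
        have hδτ : δ τ = (L : ℝ) := hδ1 L hL2 τ hτ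
        have hτL : (L : ℝ) ≤ τ := hτ.1
        have : (L : ℝ) ^ (2 * m + 3) = (L : ℝ) ^ 2 * (L : ℝ) ^ (2 * m + 1) := by ring
        show (L : ℝ) ^ (2 * m + 3) ≤ δ τ ^ 2 * τ ^ (2 * m + 1)
        rw [hδτ, this]
        gcongr
    have hlow : x ^ (-(5 / 2) : ℝ) * (x / 2) ^ (2 * m + 3) ≤ ∫ τ in (0 : ℝ)..x, f τ := by
      have h1 : x ^ (-(5 / 2) : ℝ) ≤ ε :=
        Real.rpow_le_rpow_of_nonpos hL0 hLx (by norm_num)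
      have h2 : (x / 2) ^ (2 * m + 3) ≤ (L : ℝ) ^ (2 * m + 3) :=
        pow_le_pow_left₀ (by linarith) hLge _
      have h3 : x ^ (-(5 / 2) : ℝ) * (x / 2) ^ (2 * m + 3) ≤ ε * (L : ℝ) ^ (2 * m + 3) :=
        mul_le_mul h1 h2 (by positivity) hε0
      have h4 := hnn 0 (L : ℝ) le_rfl (le_of_lt hL0)
      have h5 := hnn ((L : ℝ) + ε) x (by linarith) htop
      rw [hsplit]
      linarith
    have hkey : c * x ^ ((1 : ℝ) / 2) =
        (x ^ (-(5 / 2) : ℝ) * (x / 2) ^ (2 * m + 3)) / x ^ (2 * m) := by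
      have h3 : x ^ (3 : ℕ) * x ^ (-(5 / 2) : ℝ) = x ^ ((1 : ℝ) / 2) := by
        rw [← Real.rpow_natCast x 3, ← Real.rpow_add hx0]; norm_num
      rw [← h3, eq_div_iff (pow_ne_zero _ hx0.ne'), hcdef]
      ring
    rw [hkey]
    exact div_le_div_of_nonneg_right hlow (by positivity) |>.trans_eq rfl
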